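/- Let f : ℝⁿ → ℝⁿ be a continuous mapping and μ ≥ 0. Suppose that for every x ∈ ℝⁿ, f admits a strict μ-estimator h_x at x which is strongly regular around x, and that σ := inf over x ∈ ℝⁿ of lop(h_x, x) satisfies σ > μ. Then f is a bijection of ℝⁿ onto ℝⁿ, and f⁻¹ is Lipschitz continuous on ℝⁿ with constant (σ − μ)⁻¹. -/

import Mathlib

set_option linter.unusedSectionVars false
set_option linter.unusedVariables false


open Metric Set
open scoped ENNReal NNReal

noncomputable section

variable {E F : Type*} [NormedAddCommGroup E] [NormedAddCommGroup F]

/-- `f` is `α`-covering at `x`: for every `ε > 0` there is `r ∈ (0, ε]` with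
`B̄(f x, α r) ⊆ f (B̄(x, r))`. -/
def AlphaCoveringAt (f : E → F) (x : E) (α : ℝ) : Prop :=
  ∀ ε > (0:ℝ), ∃ r : ℝ, 0 < r ∧ r ≤ ε ∧
    closedBall (f x) (α * r) ⊆ f '' closedBall x r

/-- The covering bound `cov(f, x)`: supremum of all `α > 0` for which `f` is
`α`-covering at `x`. -/
def covBound (f : E → F) (x : E) : ℝ≥0∞ :=
  ⨆ (α : ℝ≥0) (_ : 0 < α ∧ AlphaCoveringAt f x (α : ℝ)), (α : ℝ≥0∞)

/-- `f` is linearly open around `xb` with constant `α`. -/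
def LinOpenWith (f : E → F) (xb : E) (α : ℝ) : Prop :=
  ∃ U ∈ nhds xb, ∃ V ∈ nhds (f xb), ∀ x ∈ U, ∀ r > (0:ℝ),
    ball (f x) (α * r) ∩ V ⊆ f '' ball x r

/-- The exact linear openness bound `lop(f, xb)` (`0` if no constant works). -/
def lopBound (f : E → F) (xb : E) : ℝ≥0∞ :=
  ⨆ (α : ℝ≥0) (_ : 0 < α ∧ LinOpenWith f xb (α : ℝ)), (α : ℝ≥0∞)

/-- `ℓ` is a Lipschitz constant of `h` on some neighbourhood of `xb`. -/
def IsLipConstAround (h : E → F) (xb : E) (ℓ : ℝ) : Prop :=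
  ∃ U ∈ nhds xb, ∀ x₁ ∈ U, ∀ x₂ ∈ U, ‖h x₁ - h x₂‖ ≤ ℓ * ‖x₁ - x₂‖

/-- `lip(h, xb)`: infimum of all `ℓ > 0` which are Lipschitz constants of `h`
on some neighbourhood of `xb` (`∞` if `h` is not locally Lipschitz at `xb`). -/
def lipBound (h : E → F) (xb : E) : ℝ≥0∞ :=
  ⨅ (ℓ : ℝ≥0) (_ : 0 < ℓ ∧ IsLipConstAround h xb (ℓ : ℝ)), (ℓ : ℝ≥0∞)

/-- `β` is a metric injectivity constant for `g` on some closed ball around `xb`. -/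
def IsInjConstAround (g : E → F) (xb : E) (β : ℝ) : Prop :=
  ∃ δ > (0:ℝ), ∀ x₁ ∈ closedBall xb δ, ∀ x₂ ∈ closedBall xb δ,
    β * ‖x₁ - x₂‖ ≤ ‖g x₁ - g x₂‖

/-- `g` is metrically injective around `xb`. -/
def MetricallyInjectiveAround (g : E → F) (xb : E) : Prop :=
  ∃ β > (0:ℝ), IsInjConstAround g xb β

/-- The metric injection bound `inj(g, xb)`: supremum of all valid `β > 0`. -/
def injBound (g : E → F) (xb : E) : ℝ≥0∞ :=
  ⨆ (β : ℝ≥0) (_ : 0 < β ∧ IsInjConstAround g xb (β : ℝ)), (β : ℝ≥0∞)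

/-- `h` is a strict `μ`-estimator of `f` at `xb`: `h xb = f xb` and
`lip(f - h, xb) ≤ μ`. -/
def IsStrictEstimator (f h : E → F) (xb : E) (μ : ℝ≥0) : Prop :=
  h xb = f xb ∧ lipBound (fun x => f x - h x) xb ≤ (μ : ℝ≥0∞)

/-- `g` is strongly (metrically) regular around `xb`: it is linearly open around
`xb` and the set-valued inverse `g⁻¹` has a single-valued graphical localization
around `(g xb, xb)`. -/
def StronglyRegularAround (g : E → F) (xb : E) : Prop :=
  (∃ α > (0:ℝ), LinOpenWith g xb α) ∧
  ∃ V ∈ nhds (g xb), ∃ U ∈ nhds xb, ∀ y ∈ V, ∃ x : E, g ⁻¹' {y} ∩ U = {x}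

section AuxMine
open Filter Topology
variable {G : Type*} [NormedAddCommGroup G] [NormedSpace ℝ G]

/-- continuous induction on an interval -/
lemma contInduction' {P : ℝ → Prop} {a b : ℝ} (hab : a ≤ b) (ha : P a)
    (hdc : ∀ s t, a ≤ s → s ≤ t → P t → P s)
    (hlim : ∀ t, a < t → t ≤ b → (∀ s, a ≤ s → s < t → P s) → P t)
    (hopen : ∀ t, a ≤ t → t < b → P t → ∃ t', t < t' ∧ t' ≤ b ∧ P t') : P b := by
  set S := {t | t ∈ Icc a b ∧ P t} with hS
  have hne : S.Nonempty := ⟨a, ⟨le_refl a, hab⟩, ha⟩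
  have hbdd : BddAbove S := ⟨b, fun t ht => ht.1.2⟩
  set c := sSup S with hc
  have hac : a ≤ c := le_csSup hbdd ⟨⟨le_refl a, hab⟩, ha⟩
  have hcb : c ≤ b := csSup_le hne (fun t ht => ht.1.2)
  have hPc : P c := by
    rcases eq_or_lt_of_le hac with h | h
    · exact h ▸ ha
    · refine hlim c h hcb (fun s hs hsc => ?_)
      obtain ⟨t, htS, hst⟩ := exists_lt_of_lt_csSup hne hsc
      exact hdc s t hs hst.le htS.2
  rcases eq_or_lt_of_le hcb with h | h
  · exact h ▸ hPc
  · obtain ⟨t', h1, h2, h3⟩ := hopen c hac h hPc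
    exact absurd (le_csSup hbdd ⟨⟨hac.trans h1.le, h2⟩, h3⟩) (not_le.2 h1)

/-- `f` covers at rate `κ` near every point. -/
def CovAt (f : G → G) (κ : ℝ) : Prop :=
  ∀ x : G, ∃ δ > (0:ℝ), ∀ r : ℝ, 0 < r → r ≤ δ →
    closedBall (f x) (κ * r) ⊆ f '' closedBall x r

/-- `f` is expansive at rate `κ` near every point. -/
def ExpAt (f : G → G) (κ : ℝ) : Prop :=
  ∀ x : G, ∃ δ > (0:ℝ), ∀ x₁ ∈ closedBall x δ, ∀ x₂ ∈ closedBall x δ,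
    κ * ‖x₁ - x₂‖ ≤ ‖f x₁ - f x₂‖

lemma lift_unique {f : G → G} {κ : ℝ} (hκ : 0 < κ) (hexp : ExpAt f κ)
    {p γ₁ γ₂ : ℝ → G} {M b : ℝ} (hM : 0 ≤ M) (hb : 0 ≤ b)
    (h0 : γ₁ 0 = γ₂ 0)
    (hf₁ : ∀ s ∈ Icc 0 b, f (γ₁ s) = p s) (hf₂ : ∀ s ∈ Icc 0 b, f (γ₂ s) = p s)
    (hl₁ : ∀ s ∈ Icc 0 b, ∀ s' ∈ Icc 0 b, ‖γ₁ s - γ₁ s'‖ ≤ M * |s - s'|)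
    (hl₂ : ∀ s ∈ Icc 0 b, ∀ s' ∈ Icc 0 b, ‖γ₂ s - γ₂ s'‖ ≤ M * |s - s'|) :
    ∀ s ∈ Icc 0 b, γ₁ s = γ₂ s := by
  have main : ∀ s ∈ Icc (0:ℝ) b, ∀ r ∈ Icc (0:ℝ) s, γ₁ r = γ₂ r := by
    intro s hs
    refine contInduction' (P := fun t => ∀ r ∈ Icc (0:ℝ) t, γ₁ r = γ₂ r)
      hs.1 ?_ ?_ ?_ ?_
    · intro r hr
      have : r = 0 := le_antisymm hr.2 hr.1
      rw [this, h0]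
    · intro u t hu hut hP r hr
      exact hP r ⟨hr.1, hr.2.trans hut⟩
    · -- limit step
      intro t ht0 hts IH r hr
      rcases lt_or_eq_of_le hr.2 with h | h
      · exact IH r hr.1 h r ⟨hr.1, le_refl r⟩
      subst h
      have htb : r ∈ Icc (0:ℝ) b := ⟨hr.1, hts.trans hs.2⟩
      have hnorm : ∀ ε > (0:ℝ), ‖γ₁ r - γ₂ r‖ ≤ 0 + ε := by
        intro ε hε
        set u := max 0 (r - ε / (2 * M + 1)) with hu
        have hM1 : (0:ℝ) < 2 * M + 1 := by linarith
        have hu0 : 0 ≤ u := le_max_left _ _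
        have hur : u < r := by
          rcases le_or_gt (r - ε / (2 * M + 1)) 0 with h' | h'
          · simpa [hu, max_eq_left h'] using ht0
          · rw [hu, max_eq_right h'.le]
            have : 0 < ε / (2 * M + 1) := by positivity
            linarith
        have hru : r - u ≤ ε / (2 * M + 1) := by
          have : r - ε / (2 * M + 1) ≤ u := le_max_right _ _
          linarith
        have hub : u ∈ Icc (0:ℝ) b := ⟨hu0, hur.le.trans htb.2⟩
        have heq : γ₁ u = γ₂ u := IH u hu0 hur u ⟨hu0, le_refl u⟩
        have h1 : ‖γ₁ r - γ₁ u‖ ≤ M * |r - u| := hl₁ r htb u hub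
        have h2 : ‖γ₂ u - γ₂ r‖ ≤ M * |u - r| := hl₂ u hub r htb
        have habs : |r - u| = r - u := abs_of_nonneg (by linarith)
        have habs2 : |u - r| = r - u := by rw [abs_sub_comm]; exact habs
        have htri : ‖γ₁ r - γ₂ r‖ ≤ ‖γ₁ r - γ₁ u‖ + ‖γ₂ u - γ₂ r‖ := by
          have h' := norm_add_le (γ₁ r - γ₁ u) (γ₂ u - γ₂ r)
          have heq2 : γ₁ r - γ₁ u + (γ₂ u - γ₂ r) = γ₁ r - γ₂ r := by
            rw [heq]; abel
          rwa [heq2] at h'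
        have hMbd : M * (r - u) ≤ M * (ε / (2 * M + 1)) :=
          mul_le_mul_of_nonneg_left hru hM
        have hbd : ‖γ₁ r - γ₂ r‖ ≤ 2 * (M * (ε / (2 * M + 1))) := by
          rw [habs] at h1; rw [habs2] at h2; linarith
        have hle : 2 * (M * (ε / (2 * M + 1))) ≤ ε := by
          have h1' : 2 * (M * (ε / (2 * M + 1))) = (2 * M) * (ε / (2 * M + 1)) := by
            ring
          have h2' : (2 * M) * (ε / (2 * M + 1)) ≤ (2 * M + 1) * (ε / (2 * M + 1)) :=
            mul_le_mul_of_nonneg_right (by linarith) (by positivity)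
          have h3' : (2 * M + 1) * (ε / (2 * M + 1)) = ε := by field_simp
          linarith
        linarith
      have := le_of_forall_pos_le_add hnorm
      have : ‖γ₁ r - γ₂ r‖ = 0 := le_antisymm (by linarith) (norm_nonneg _)
      exact sub_eq_zero.mp (norm_eq_zero.mp this)
    · -- open step
      intro t ht0 hts hP
      have htb : t ∈ Icc (0:ℝ) b := ⟨ht0, hts.le.trans hs.2⟩
      obtain ⟨δ, hδ, hE⟩ := hexp (γ₁ t)
      have hM1 : (0:ℝ) < M + 1 := by linarith
      set t' := min s (t + δ / (M + 1)) with ht'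
      have hstep : 0 < δ / (M + 1) := div_pos hδ hM1
      have htt' : t < t' := lt_min hts (by linarith)
      refine ⟨t', htt', min_le_left _ _, ?_⟩
      intro r hr
      rcases le_or_gt r t with h | h
      · exact hP r ⟨hr.1, h⟩
      have hrb : r ∈ Icc (0:ℝ) b := ⟨hr.1, hr.2.trans ((min_le_left _ _).trans hs.2)⟩
      have hrt : r - t ≤ δ / (M + 1) := by
        have := hr.2.trans (min_le_right _ _); linarith
      have hMrt : M * (r - t) ≤ δ := by
        have h1' : M * (r - t) ≤ M * (δ / (M + 1)) := mul_le_mul_of_nonneg_left hrt hM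
        have h2' : M * (δ / (M + 1)) ≤ (M + 1) * (δ / (M + 1)) :=
          mul_le_mul_of_nonneg_right (by linarith) (by positivity)
        have h3' : (M + 1) * (δ / (M + 1)) = δ := by field_simp
        linarith
      have hmem₁ : γ₁ r ∈ closedBall (γ₁ t) δ := by
        rw [mem_closedBall, dist_eq_norm]
        calc ‖γ₁ r - γ₁ t‖ ≤ M * |r - t| := hl₁ r hrb t htb
          _ = M * (r - t) := by rw [abs_of_nonneg (by linarith)]
          _ ≤ δ := hMrt
      have hmem₂ : γ₂ r ∈ closedBall (γ₁ t) δ := by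
        rw [mem_closedBall, dist_eq_norm]
        have heqt : γ₁ t = γ₂ t := hP t ⟨ht0, le_refl t⟩
        rw [heqt]
        calc ‖γ₂ r - γ₂ t‖ ≤ M * |r - t| := hl₂ r hrb t htb
          _ = M * (r - t) := by rw [abs_of_nonneg (by linarith)]
          _ ≤ δ := hMrt
      have := hE (γ₁ r) hmem₁ (γ₂ r) hmem₂
      rw [hf₁ r hrb, hf₂ r hrb, sub_self, norm_zero] at this
      have h0' : ‖γ₁ r - γ₂ r‖ ≤ 0 := by
        by_contra hc
        push_neg at hc
        nlinarith
      have : ‖γ₁ r - γ₂ r‖ = 0 := le_antisymm h0' (norm_nonneg _)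
      exact sub_eq_zero.mp (norm_eq_zero.mp this)
  intro s hs
  exact main s hs s ⟨hs.1, le_refl s⟩

lemma lift_exists [CompleteSpace G] {f : G → G} {κ : ℝ} (hκ : 0 < κ)
    (hcont : Continuous f) (hcov : CovAt f κ) (hexp : ExpAt f κ)
    (x0 v : G) :
    ∃ γ : ℝ → G, γ 0 = x0 ∧ (∀ s ∈ Icc (0:ℝ) 1, f (γ s) = f x0 + s • v) ∧
      ∀ s ∈ Icc (0:ℝ) 1, ∀ s' ∈ Icc (0:ℝ) 1,
        ‖γ s - γ s'‖ ≤ κ⁻¹ * ‖v‖ * |s - s'| := by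
  classical
  set M := κ⁻¹ * ‖v‖ with hMdef
  have hM : 0 ≤ M := by positivity
  set p : ℝ → G := fun s => f x0 + s • v with hpdef
  have hpdiff : ∀ s s' : ℝ, p s - p s' = (s - s') • v := by
    intro s s'
    show f x0 + s • v - (f x0 + s' • v) = (s - s') • v
    rw [sub_smul]; abel
  have hpnorm : ∀ s s' : ℝ, ‖p s - p s'‖ = |s - s'| * ‖v‖ := by
    intro s s'; rw [hpdiff, norm_smul, Real.norm_eq_abs]
  set P : ℝ → Prop := fun t => ∃ γ : ℝ → G, γ 0 = x0 ∧
      (∀ s ∈ Icc (0:ℝ) t, f (γ s) = p s) ∧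
      (∀ s ∈ Icc (0:ℝ) t, ∀ s' ∈ Icc (0:ℝ) t, ‖γ s - γ s'‖ ≤ M * |s - s'|)
    with hPdef
  suffices hP1 : P 1 by
    obtain ⟨γ, hg1, hg2, hg3⟩ := hP1
    exact ⟨γ, hg1, hg2, hg3⟩
  refine contInduction' zero_le_one ?_ ?_ ?_ ?_
  · -- P 0
    refine ⟨fun _ => x0, rfl, ?_, ?_⟩
    · intro s hs
      have hs0 : s = 0 := le_antisymm hs.2 hs.1
      show f x0 = p s
      rw [hs0]; show f x0 = f x0 + (0:ℝ) • v; rw [zero_smul, add_zero]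
    · intro s hs s' hs'
      show ‖x0 - x0‖ ≤ M * |s - s'|
      rw [sub_self, norm_zero]; positivity
  · -- downward closed
    intro s t hs hst hPt
    obtain ⟨γ, hg1, hg2, hg3⟩ := hPt
    exact ⟨γ, hg1, fun r hr => hg2 r ⟨hr.1, hr.2.trans hst⟩,
      fun r hr r' hr' => hg3 r ⟨hr.1, hr.2.trans hst⟩ r' ⟨hr'.1, hr'.2.trans hst⟩⟩
  · -- limit step
    intro t ht0 ht1 IH
    have hch : ∀ s, 0 ≤ s → s < t → P s := IH
    set Γ : ℝ → G := fun s =>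
      if hs : 0 ≤ s ∧ s < t then (hch s hs.1 hs.2).choose s else x0 with hΓ
    have hspec : ∀ s (hs : 0 ≤ s ∧ s < t),
        (hch s hs.1 hs.2).choose 0 = x0 ∧
        (∀ r ∈ Icc (0:ℝ) s, f ((hch s hs.1 hs.2).choose r) = p r) ∧
        (∀ r ∈ Icc (0:ℝ) s, ∀ r' ∈ Icc (0:ℝ) s,
          ‖(hch s hs.1 hs.2).choose r - (hch s hs.1 hs.2).choose r'‖ ≤ M * |r - r'|) :=
      fun s hs => (hch s hs.1 hs.2).choose_spec
    have hcoh : ∀ s' (hs' : 0 ≤ s' ∧ s' < t), ∀ s ∈ Icc (0:ℝ) s',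
        Γ s = (hch s' hs'.1 hs'.2).choose s := by
      intro s' hs' s hs
      have hs0 : 0 ≤ s := hs.1
      have hst' : s < t := lt_of_le_of_lt hs.2 hs'.2
      have he : Γ s = (hch s hs0 hst').choose s := by
        rw [hΓ]; exact dif_pos ⟨hs0, hst'⟩
      rw [he]
      obtain ⟨ha1, ha2, ha3⟩ := hspec s ⟨hs0, hst'⟩
      obtain ⟨hb1, hb2, hb3⟩ := hspec s' hs'
      exact lift_unique hκ hexp hM hs0 (ha1.trans hb1.symm)
        ha2 (fun r hr => hb2 r ⟨hr.1, hr.2.trans hs.2⟩)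
        ha3 (fun r hr r' hr' =>
          hb3 r ⟨hr.1, hr.2.trans hs.2⟩ r' ⟨hr'.1, hr'.2.trans hs.2⟩)
        s ⟨hs0, le_refl s⟩
    have hΓ0 : Γ 0 = x0 := by
      rw [hcoh 0 ⟨le_refl 0, ht0⟩ 0 ⟨le_refl 0, le_refl 0⟩]
      exact (hspec 0 ⟨le_refl 0, ht0⟩).1
    have hΓf : ∀ s, 0 ≤ s → s < t → f (Γ s) = p s := by
      intro s h1 h2
      rw [hcoh s ⟨h1, h2⟩ s ⟨h1, le_refl s⟩]
      exact (hspec s ⟨h1, h2⟩).2.1 s ⟨h1, le_refl s⟩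
    have hΓl : ∀ s, 0 ≤ s → s < t → ∀ s', 0 ≤ s' → s' < t →
        ‖Γ s - Γ s'‖ ≤ M * |s - s'| := by
      intro s h1 h2 s' h1' h2'
      rcases le_total s s' with h | h
      · rw [hcoh s' ⟨h1', h2'⟩ s ⟨h1, h⟩, hcoh s' ⟨h1', h2'⟩ s' ⟨h1', le_refl s'⟩]
        exact (hspec s' ⟨h1', h2'⟩).2.2 s ⟨h1, h⟩ s' ⟨h1', le_refl s'⟩
      · rw [hcoh s ⟨h1, h2⟩ s ⟨h1, le_refl s⟩, hcoh s ⟨h1, h2⟩ s' ⟨h1', h⟩]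
        exact (hspec s ⟨h1, h2⟩).2.2 s ⟨h1, le_refl s⟩ s' ⟨h1', h⟩
    set u : ℕ → G := fun k => Γ (t - t / (k + 1)) with hu
    have hsk : ∀ k : ℕ, 0 ≤ t - t / (k + 1) ∧ t - t / (k + 1) < t := by
      intro k
      have hk1 : (0:ℝ) < (k:ℝ) + 1 := by positivity
      constructor
      · have := div_le_self ht0.le (by push_cast; linarith : (1:ℝ) ≤ (k:ℝ) + 1)
        linarith
      · have := div_pos ht0 hk1
        linarith
    have hmono : ∀ i j : ℕ, i ≤ j → t / ((j:ℝ) + 1) ≤ t / ((i:ℝ) + 1) := by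
      intro i j hij
      have hi : (0:ℝ) < (i:ℝ) + 1 := by positivity
      have h1d : 1 / ((j:ℝ) + 1) ≤ 1 / ((i:ℝ) + 1) :=
        one_div_le_one_div_of_le hi (by push_cast; exact_mod_cast by linarith [hij] : ((i:ℝ)+1) ≤ (j:ℝ)+1)
      calc t / ((j:ℝ) + 1) = t * (1 / ((j:ℝ) + 1)) := by ring
        _ ≤ t * (1 / ((i:ℝ) + 1)) := mul_le_mul_of_nonneg_left h1d ht0.le
        _ = t / ((i:ℝ) + 1) := by ring
    have hcauchy : CauchySeq u := by
      refine cauchySeq_of_le_tendsto_0 (fun N : ℕ => M * (t / ((N:ℝ) + 1))) ?_ ?_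
      · intro n m N hn hm
        have h1 := hsk n; have h2 := hsk m
        rw [dist_eq_norm]
        have hstep := hΓl _ h1.1 h1.2 _ h2.1 h2.2
        refine hstep.trans (mul_le_mul_of_nonneg_left ?_ hM)
        have e1 : t - t / ((n:ℝ)+1) - (t - t / ((m:ℝ)+1)) = t/((m:ℝ)+1) - t/((n:ℝ)+1) := by
          ring
        rw [e1, abs_le]
        have hn' := hmono N n hn
        have hm' := hmono N m hm
        have hnn : 0 ≤ t / ((n:ℝ)+1) := div_nonneg ht0.le (by positivity)
        have hmn : 0 ≤ t / ((m:ℝ)+1) := div_nonneg ht0.le (by positivity)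
        constructor <;> linarith
      · have h := tendsto_one_div_add_atTop_nhds_zero_nat.const_mul (M * t)
        rw [mul_zero] at h
        exact h.congr (fun n => by ring)
    obtain ⟨xt, hxt⟩ := cauchySeq_tendsto_of_complete hcauchy
    have hskt : Tendsto (fun k : ℕ => t - t / ((k:ℝ) + 1)) atTop (𝓝 t) := by
      have h := tendsto_one_div_add_atTop_nhds_zero_nat.const_mul t
      rw [mul_zero] at h
      have h2 : Tendsto (fun k : ℕ => t - t * (1 / ((k:ℝ) + 1))) atTop (𝓝 (t - 0)) :=
        tendsto_const_nhds.sub h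
      rw [sub_zero] at h2
      exact h2.congr (fun k => by ring)
    have hpc : Continuous p := continuous_const.add (continuous_id.smul continuous_const)
    have hfxt : f xt = p t := by
      have h1 : Tendsto (fun k => f (u k)) atTop (𝓝 (f xt)) := (hcont.tendsto xt).comp hxt
      have h2 : (fun k => f (u k)) = fun k : ℕ => p (t - t / ((k:ℝ) + 1)) :=
        funext fun k => hΓf _ (hsk k).1 (hsk k).2
      have h3 : Tendsto (fun k : ℕ => p (t - t / ((k:ℝ) + 1))) atTop (𝓝 (p t)) :=
        (hpc.tendsto t).comp hskt
      rw [h2] at h1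
      exact tendsto_nhds_unique h1 h3
    have hΓlim : ∀ s, 0 ≤ s → s < t → ‖Γ s - xt‖ ≤ M * |s - t| := by
      intro s h1 h2
      have hle : ∀ᶠ k in atTop, ‖Γ s - u k‖ ≤ M * |s - (t - t / ((k:ℝ) + 1))| := by
        filter_upwards with k
        exact hΓl s h1 h2 _ (hsk k).1 (hsk k).2
      have ht1' : Tendsto (fun k => ‖Γ s - u k‖) atTop (𝓝 ‖Γ s - xt‖) :=
        (tendsto_const_nhds.sub hxt).norm
      have ht2' : Tendsto (fun k : ℕ => M * |s - (t - t / ((k:ℝ) + 1))|) atTop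
          (𝓝 (M * |s - t|)) := by
        have h' : Tendsto (fun k : ℕ => s - (t - t / ((k:ℝ) + 1))) atTop (𝓝 (s - t)) :=
          tendsto_const_nhds.sub hskt
        exact (h'.abs).const_mul M
      exact le_of_tendsto_of_tendsto ht1' ht2' hle
    set γ' : ℝ → G := fun s => if s < t then Γ s else xt with hγ'
    refine ⟨γ', ?_, ?_, ?_⟩
    · show (if (0:ℝ) < t then Γ 0 else xt) = x0
      rw [if_pos ht0]; exact hΓ0
    · intro s hs
      rcases lt_or_ge s t with h | h
      · show f (if s < t then Γ s else xt) = p s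
        rw [if_pos h]; exact hΓf s hs.1 h
      · have hst : s = t := le_antisymm hs.2 h
        show f (if s < t then Γ s else xt) = p s
        rw [if_neg (not_lt.mpr h), hfxt, hst]
    · intro s hs s' hs'
      show ‖(if s < t then Γ s else xt) - (if s' < t then Γ s' else xt)‖ ≤ M * |s - s'|
      rcases lt_or_ge s t with h | h <;> rcases lt_or_ge s' t with h' | h'
      · rw [if_pos h, if_pos h']; exact hΓl s hs.1 h s' hs'.1 h'
      · have hst' : s' = t := le_antisymm hs'.2 h'
        rw [if_pos h, if_neg (not_lt.mpr h'), hst']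
        exact hΓlim s hs.1 h
      · have hst : s = t := le_antisymm hs.2 h
        rw [if_neg (not_lt.mpr h), if_pos h']
        rw [norm_sub_rev, abs_sub_comm, hst]
        exact hΓlim s' hs'.1 h'
      · have hst : s = t := le_antisymm hs.2 h
        have hst' : s' = t := le_antisymm hs'.2 h'
        rw [if_neg (not_lt.mpr h), if_neg (not_lt.mpr h'), sub_self, norm_zero, hst, hst']
        simp
  · -- extension step
    intro t ht0 ht1 hPt
    obtain ⟨γ, hg1, hg2, hg3⟩ := hPt
    have htt : t ∈ Icc (0:ℝ) t := ⟨ht0, le_refl t⟩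
    set z := γ t with hz
    have hfz : f z = p t := hg2 t htt
    obtain ⟨δc, hδc, hcovz⟩ := hcov z
    obtain ⟨δe, hδe, hexpz⟩ := hexp z
    set δ := min δc δe with hδdef
    have hδ : 0 < δ := lt_min hδc hδe
    set η := κ * δ / (‖v‖ + 1) with hη
    have hη0 : 0 < η := by positivity
    set t' := min 1 (t + η) with ht'def
    have htt' : t < t' := lt_min ht1 (by linarith)
    have hMη : M * η ≤ δ := by
      have hv1 : (0:ℝ) < ‖v‖ + 1 := by positivity
      have he : M * η = δ * (‖v‖ / (‖v‖ + 1)) := by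
        rw [hMdef, hη]; field_simp
      rw [he]
      have : ‖v‖ / (‖v‖ + 1) ≤ 1 := by
        rw [div_le_one hv1]; linarith
      calc δ * (‖v‖ / (‖v‖ + 1)) ≤ δ * 1 := mul_le_mul_of_nonneg_left this hδ.le
        _ = δ := mul_one δ
    have hext : ∀ s, t < s → s ≤ t' → ∃ x : G, f x = p s ∧ ‖x - z‖ ≤ M * (s - t) := by
      intro s hst hst'
      have hstη : s - t ≤ η := by
        have := hst'.trans (min_le_right 1 (t + η))
        linarith
      by_cases hv : (s - t) * ‖v‖ = 0
      · refine ⟨z, ?_, ?_⟩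
        · rw [hfz]
          have hn : ‖p s - p t‖ = 0 := by
            rw [hpnorm, abs_of_nonneg (by linarith : (0:ℝ) ≤ s - t), hv]
          have := norm_eq_zero.mp hn
          rw [sub_eq_zero] at this
          exact this.symm
        · rw [sub_self, norm_zero]; exact mul_nonneg hM (by linarith)
      · have hv0 : 0 ≤ (s - t) * ‖v‖ := mul_nonneg (by linarith) (norm_nonneg v)
        have hv' : 0 < (s - t) * ‖v‖ := lt_of_le_of_ne hv0 (Ne.symm hv)
        set r := κ⁻¹ * ((s - t) * ‖v‖) with hr
        have hr0 : 0 < r := mul_pos (inv_pos.mpr hκ) hv'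
        have hrδ : r ≤ δc := by
          have h1' : r ≤ κ⁻¹ * (η * ‖v‖) := by
            apply mul_le_mul_of_nonneg_left _ (by positivity)
            exact mul_le_mul_of_nonneg_right hstη (norm_nonneg v)
          have h2' : κ⁻¹ * (η * ‖v‖) = M * η := by rw [hMdef]; ring
          have h3' : M * η ≤ δ := hMη
          have h4' : δ ≤ δc := min_le_left _ _
          linarith
        have hmem : p s ∈ closedBall (f z) (κ * r) := by
          rw [mem_closedBall, dist_eq_norm, hfz, hpnorm,
            abs_of_nonneg (by linarith : (0:ℝ) ≤ s - t)]
          have he' : κ * r = (s - t) * ‖v‖ := by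
            rw [hr]; field_simp
          rw [he']
        obtain ⟨x, hx1, hx2⟩ := hcovz r hr0 hrδ hmem
        refine ⟨x, hx2, ?_⟩
        have hxz : ‖x - z‖ ≤ r := by
          rw [← dist_eq_norm]; exact mem_closedBall.mp hx1
        have : r = M * (s - t) := by rw [hr, hMdef]; ring
        linarith [hxz, this ▸ hxz]
    choose F hF1 hF2 using hext
    set γ'' : ℝ → G := fun s =>
      if hs : t < s ∧ s ≤ t' then F s hs.1 hs.2 else γ s with hγ''
    have hγ''old : ∀ s, s ≤ t → γ'' s = γ s := by
      intro s hs
      rw [hγ'']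
      exact dif_neg (by rintro ⟨h1, _⟩; linarith)
    have hγ''new : ∀ s (hs : t < s ∧ s ≤ t'), γ'' s = F s hs.1 hs.2 := by
      intro s hs
      rw [hγ'']
      exact dif_pos hs
    have hFδe : ∀ s (hs : t < s ∧ s ≤ t'), ‖F s hs.1 hs.2 - z‖ ≤ δe := by
      intro s hs
      have h1' := hF2 s hs.1 hs.2
      have hstη : s - t ≤ η := by
        have := hs.2.trans (min_le_right 1 (t + η))
        linarith
      have h2' : M * (s - t) ≤ M * η := mul_le_mul_of_nonneg_left hstη hM
      have h3' : δ ≤ δe := min_le_right _ _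
      linarith
    refine ⟨t', htt', min_le_left _ _, γ'', ?_, ?_, ?_⟩
    · rw [hγ''old 0 ht0]; exact hg1
    · intro s hs
      by_cases h : t < s
      · rw [hγ''new s ⟨h, hs.2⟩]; exact hF1 s h hs.2
      · rw [hγ''old s (not_lt.mp h)]
        exact hg2 s ⟨hs.1, not_lt.mp h⟩
    · have hmain : ∀ s ∈ Icc (0:ℝ) t', ∀ s' ∈ Icc (0:ℝ) t', s ≤ s' →
          ‖γ'' s - γ'' s'‖ ≤ M * |s - s'| := by
        intro s hs s' hs' hss
        by_cases h' : t < s'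
        · have hs'm : t < s' ∧ s' ≤ t' := ⟨h', hs'.2⟩
          rw [hγ''new s' hs'm]
          by_cases h : t < s
          · have hsm : t < s ∧ s ≤ t' := ⟨h, hs.2⟩
            rw [hγ''new s hsm]
            have hm1 : F s hsm.1 hsm.2 ∈ closedBall z δe := by
              rw [mem_closedBall, dist_eq_norm]
              exact hFδe s hsm
            have hm2 : F s' hs'm.1 hs'm.2 ∈ closedBall z δe := by
              rw [mem_closedBall, dist_eq_norm]
              exact hFδe s' hs'm
            have hE := hexpz _ hm1 _ hm2
            rw [hF1 s hsm.1 hsm.2, hF1 s' hs'm.1 hs'm.2, hpnorm] at hE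
            have : ‖F s hsm.1 hsm.2 - F s' hs'm.1 hs'm.2‖ ≤ κ⁻¹ * (|s - s'| * ‖v‖) := by
              rw [← le_div_iff₀' hκ] at hE
              calc ‖F s hsm.1 hsm.2 - F s' hs'm.1 hs'm.2‖ ≤ |s - s'| * ‖v‖ / κ := hE
                _ = κ⁻¹ * (|s - s'| * ‖v‖) := by ring
            calc ‖F s hsm.1 hsm.2 - F s' hs'm.1 hs'm.2‖ ≤ κ⁻¹ * (|s - s'| * ‖v‖) := this
              _ = M * |s - s'| := by rw [hMdef]; ring
          · have hst : s ≤ t := not_lt.mp h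
            rw [hγ''old s hst]
            have htri : ‖γ s - F s' hs'm.1 hs'm.2‖ ≤ ‖γ s - z‖ + ‖z - F s' hs'm.1 hs'm.2‖ := by
              have h'' := norm_add_le (γ s - z) (z - F s' hs'm.1 hs'm.2)
              have he'' : γ s - z + (z - F s' hs'm.1 hs'm.2) = γ s - F s' hs'm.1 hs'm.2 := by
                abel
              rwa [he''] at h''
            have h1' : ‖γ s - z‖ ≤ M * (t - s) := by
              have := hg3 s ⟨hs.1, hst⟩ t htt
              rwa [abs_of_nonpos (by linarith), neg_sub] at this
            have h2' : ‖z - F s' hs'm.1 hs'm.2‖ ≤ M * (s' - t) := by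
              rw [norm_sub_rev]
              exact hF2 s' hs'm.1 hs'm.2
            have habs : |s - s'| = s' - s := by
              rw [abs_sub_comm, abs_of_nonneg (by linarith)]
            rw [habs]
            calc ‖γ s - F s' hs'm.1 hs'm.2‖ ≤ M * (t - s) + M * (s' - t) := by linarith
              _ = M * (s' - s) := by ring
        · have hs't : s' ≤ t := not_lt.mp h'
          rw [hγ''old s (hss.trans hs't), hγ''old s' hs't]
          exact hg3 s ⟨hs.1, hss.trans hs't⟩ s' ⟨hs'.1, hs't⟩
      intro s hs s' hs'
      rcases le_total s s' with h | h
      · exact hmain s hs s' hs' h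
      · rw [norm_sub_rev, abs_sub_comm]
        exact hmain s' hs' s hs h

lemma unif_exp {f : G → G} {κ : ℝ} (hexp : ExpAt f κ) {K : Set G} (hK : IsCompact K) :
    ∃ δ0 > (0:ℝ), ∀ z ∈ K, ∀ x₁ ∈ closedBall z δ0, ∀ x₂ ∈ closedBall z δ0,
      κ * ‖x₁ - x₂‖ ≤ ‖f x₁ - f x₂‖ := by
  classical
  choose δ hδ hE using hexp
  obtain ⟨δ0, hδ0, hball⟩ := lebesgue_number_lemma_of_metric hK
    (c := fun z : G => ball z (δ z / 2)) (fun z => isOpen_ball)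
    (fun z hz => mem_iUnion.mpr ⟨z, mem_ball_self (by linarith [hδ z])⟩)
  refine ⟨δ0 / 2, by linarith, ?_⟩
  intro z hz x₁ hx₁ x₂ hx₂
  obtain ⟨w, hw⟩ := hball z hz
  have hsub : closedBall z (δ0 / 2) ⊆ closedBall w (δ w) := by
    intro x hx
    have h1 : x ∈ ball w (δ w / 2) := hw (lt_of_le_of_lt (mem_closedBall.mp hx) (by linarith))
    have := mem_ball.mp h1
    exact mem_closedBall.mpr (by linarith [hδ w])
  exact hE w x₁ (hsub hx₁) x₂ (hsub hx₂)

lemma global_cov [ProperSpace G] {f : G → G} {κ : ℝ} (hκ : 0 < κ)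
    (hcont : Continuous f) (hcov : CovAt f κ) (x0 y : G) :
    ∃ x : G, f x = y ∧ κ * ‖x - x0‖ ≤ ‖f x0 - y‖ := by
  set C := {x : G | κ * ‖x - x0‖ + ‖f x - y‖ ≤ ‖f x0 - y‖} with hC
  have hx0C : x0 ∈ C := by
    show κ * ‖x0 - x0‖ + ‖f x0 - y‖ ≤ ‖f x0 - y‖
    rw [sub_self, norm_zero, mul_zero, zero_add]
  have hCc : IsClosed C := by
    apply isClosed_le
    · exact (continuous_const.mul ((continuous_id.sub continuous_const).norm)).add
        ((hcont.sub continuous_const).norm)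
    · exact continuous_const
  have hCsub : C ⊆ closedBall x0 (‖f x0 - y‖ / κ) := by
    intro x hx
    have hx' : κ * ‖x - x0‖ + ‖f x - y‖ ≤ ‖f x0 - y‖ := hx
    rw [mem_closedBall, dist_eq_norm, le_div_iff₀ hκ]
    nlinarith [norm_nonneg (f x - y)]
  have hCcomp : IsCompact C := (isCompact_closedBall x0 _).of_isClosed_subset hCc hCsub
  obtain ⟨xs, hxsC, hmin⟩ := hCcomp.exists_isMinOn ⟨x0, hx0C⟩
    ((hcont.sub (continuous_const : Continuous fun _ : G => y)).norm.continuousOn)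
  have hxsC' : κ * ‖xs - x0‖ + ‖f xs - y‖ ≤ ‖f x0 - y‖ := hxsC
  by_cases hm : ‖f xs - y‖ = 0
  · refine ⟨xs, ?_, ?_⟩
    · have := norm_eq_zero.mp hm
      rwa [sub_eq_zero] at this
    · linarith
  · exfalso
    have hm0 : 0 < ‖f xs - y‖ := lt_of_le_of_ne (norm_nonneg _) (Ne.symm hm)
    obtain ⟨δ, hδ, hcovs⟩ := hcov xs
    set m := ‖f xs - y‖ with hmdef
    set r := min δ (m / κ) with hr
    have hr0 : 0 < r := lt_min hδ (div_pos hm0 hκ)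
    have hκrm : κ * r ≤ m := by
      have h1 := min_le_right δ (m / κ)
      calc κ * r ≤ κ * (m / κ) := mul_le_mul_of_nonneg_left h1 hκ.le
        _ = m := by field_simp
    set y' := f xs + (κ * r / m) • (y - f xs) with hy'
    have hy'mem : y' ∈ closedBall (f xs) (κ * r) := by
      rw [mem_closedBall, dist_eq_norm]
      have he : y' - f xs = (κ * r / m) • (y - f xs) := by rw [hy']; abel
      rw [he, norm_smul, Real.norm_eq_abs, abs_of_nonneg (by positivity),
        norm_sub_rev]
      rw [← hmdef, div_mul_cancel₀ _ hm]
    obtain ⟨x', hx'ball, hfx'⟩ := hcovs r hr0 (min_le_left _ _) hy'mem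
    have hdist : ‖f x' - y‖ = m - κ * r := by
      rw [hfx']
      have he : y' - y = (κ * r / m - 1) • (y - f xs) := by
        rw [hy', sub_smul, one_smul]; abel
      rw [he, norm_smul, Real.norm_eq_abs, norm_sub_rev, ← hmdef]
      have habs : |κ * r / m - 1| = 1 - κ * r / m := by
        rw [abs_of_nonpos]
        · ring
        · rw [sub_nonpos, div_le_one hm0]; exact hκrm
      rw [habs]
      field_simp
    have hx'C : x' ∈ C := by
      have h1 : ‖x' - xs‖ ≤ r := by
        rw [← dist_eq_norm]; exact mem_closedBall.mp hx'ball
      have h2 := dist_triangle x' xs x0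
      rw [dist_eq_norm, dist_eq_norm, dist_eq_norm] at h2
      show κ * ‖x' - x0‖ + ‖f x' - y‖ ≤ ‖f x0 - y‖
      rw [hdist]
      nlinarith
    have hmin' : ‖f xs - y‖ ≤ ‖f x' - y‖ := (isMinOn_iff.mp hmin) x' hx'C
    rw [hdist] at hmin'
    nlinarith [mul_pos hκ hr0]

lemma lift_compare {f : G → G} {κ : ℝ} (hκ : 0 < κ)
    {p₁ p₂ γ₁ γ₂ : ℝ → G} {M ε δ0 : ℝ} (hM : 0 ≤ M)
    (hδ : κ⁻¹ * ε < δ0)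
    (hexpK : ∀ t ∈ Icc (0:ℝ) 1, ∀ x₁ ∈ closedBall (γ₁ t) δ0,
      ∀ x₂ ∈ closedBall (γ₁ t) δ0, κ * ‖x₁ - x₂‖ ≤ ‖f x₁ - f x₂‖)
    (h0 : γ₁ 0 = γ₂ 0)
    (hf₁ : ∀ s ∈ Icc (0:ℝ) 1, f (γ₁ s) = p₁ s)
    (hf₂ : ∀ s ∈ Icc (0:ℝ) 1, f (γ₂ s) = p₂ s)
    (hl₁ : ∀ s ∈ Icc (0:ℝ) 1, ∀ s' ∈ Icc (0:ℝ) 1, ‖γ₁ s - γ₁ s'‖ ≤ M * |s - s'|)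
    (hl₂ : ∀ s ∈ Icc (0:ℝ) 1, ∀ s' ∈ Icc (0:ℝ) 1, ‖γ₂ s - γ₂ s'‖ ≤ M * |s - s'|)
    (hp : ∀ s ∈ Icc (0:ℝ) 1, ‖p₁ s - p₂ s‖ ≤ ε) :
    ∀ s ∈ Icc (0:ℝ) 1, ‖γ₁ s - γ₂ s‖ ≤ κ⁻¹ * ε := by
  have hε : 0 ≤ ε := le_trans (norm_nonneg _) (hp 0 ⟨le_refl 0, zero_le_one⟩)
  have hκε : 0 ≤ κ⁻¹ * ε := by positivity
  suffices hmain : ∀ t ∈ Icc (0:ℝ) 1, ∀ s ∈ Icc (0:ℝ) t, ‖γ₁ s - γ₂ s‖ ≤ κ⁻¹ * ε by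
    intro s hs
    exact hmain s hs s ⟨hs.1, le_refl s⟩
  intro t ht
  refine contInduction' (P := fun t => ∀ s ∈ Icc (0:ℝ) t, ‖γ₁ s - γ₂ s‖ ≤ κ⁻¹ * ε)
    ht.1 ?_ ?_ ?_ ?_
  · intro s hs
    have : s = 0 := le_antisymm hs.2 hs.1
    rw [this, h0, sub_self, norm_zero]
    exact hκε
  · intro u w hu huw hP s hs
    exact hP s ⟨hs.1, hs.2.trans huw⟩
  · -- limit
    intro r hr0 hrt IH s hs
    rcases lt_or_eq_of_le hs.2 with h | h
    · exact IH s hs.1 h s ⟨hs.1, le_refl s⟩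
    subst h
    have hsb : s ∈ Icc (0:ℝ) 1 := ⟨hs.1, hrt.trans ht.2⟩
    refine le_of_forall_pos_le_add ?_
    intro e he
    have hM1 : (0:ℝ) < 2 * M + 1 := by linarith
    set u := max 0 (s - e / (2 * M + 1)) with hu
    have hu0 : 0 ≤ u := le_max_left _ _
    have hus : u < s := by
      rcases le_or_gt (s - e / (2 * M + 1)) 0 with h' | h'
      · simpa [hu, max_eq_left h'] using hr0
      · rw [hu, max_eq_right h'.le]
        have : 0 < e / (2 * M + 1) := by positivity
        linarith
    have hsu : s - u ≤ e / (2 * M + 1) := by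
      have : s - e / (2 * M + 1) ≤ u := le_max_right _ _
      linarith
    have hub : u ∈ Icc (0:ℝ) 1 := ⟨hu0, hus.le.trans hsb.2⟩
    have hIH : ‖γ₁ u - γ₂ u‖ ≤ κ⁻¹ * ε := IH u hu0 hus u ⟨hu0, le_refl u⟩
    have h1 : ‖γ₁ s - γ₁ u‖ ≤ M * |s - u| := hl₁ s hsb u hub
    have h2 : ‖γ₂ u - γ₂ s‖ ≤ M * |u - s| := hl₂ u hub s hsb
    have habs : |s - u| = s - u := abs_of_nonneg (by linarith)
    have habs2 : |u - s| = s - u := by rw [abs_sub_comm]; exact habs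
    have htri : ‖γ₁ s - γ₂ s‖ ≤ ‖γ₁ s - γ₁ u‖ + ‖γ₁ u - γ₂ u‖ + ‖γ₂ u - γ₂ s‖ := by
      have h' := norm_add₃_le (a := γ₁ s - γ₁ u) (b := γ₁ u - γ₂ u) (c := γ₂ u - γ₂ s)
      have he' : γ₁ s - γ₁ u + (γ₁ u - γ₂ u) + (γ₂ u - γ₂ s) = γ₁ s - γ₂ s := by abel
      rwa [he'] at h'
    have hle : 2 * (M * (e / (2 * M + 1))) ≤ e := by
      have h1' : 2 * (M * (e / (2 * M + 1))) = (2 * M) * (e / (2 * M + 1)) := by ring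
      have h2' : (2 * M) * (e / (2 * M + 1)) ≤ (2 * M + 1) * (e / (2 * M + 1)) :=
        mul_le_mul_of_nonneg_right (by linarith) (by positivity)
      have h3' : (2 * M + 1) * (e / (2 * M + 1)) = e := by field_simp
      linarith
    have hb1 : M * (s - u) ≤ M * (e / (2 * M + 1)) := mul_le_mul_of_nonneg_left hsu hM
    rw [habs] at h1; rw [habs2] at h2
    linarith
  · -- open
    intro r hr0 hrt hP
    have hrb : r ∈ Icc (0:ℝ) 1 := ⟨hr0, hrt.le.trans ht.2⟩
    have hM1 : (0:ℝ) < 2 * M + 1 := by linarith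
    have hgap : 0 < δ0 - κ⁻¹ * ε := by linarith
    set step := (δ0 - κ⁻¹ * ε) / (2 * M + 1) with hstep
    have hstep0 : 0 < step := by positivity
    set t' := min t (r + step) with ht'
    have hrt' : r < t' := lt_min hrt (by linarith)
    refine ⟨t', hrt', min_le_left _ _, ?_⟩
    intro s hs
    rcases le_or_gt s r with h | h
    · exact hP s ⟨hs.1, h⟩
    have hsb : s ∈ Icc (0:ℝ) 1 := ⟨hs.1, (hs.2.trans (min_le_left _ _)).trans ht.2⟩
    have hsr : s - r ≤ step := by
      have := hs.2.trans (min_le_right t (r + step))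
      linarith
    have hrq := hP r ⟨hr0, le_refl r⟩
    have h1 : ‖γ₁ s - γ₁ r‖ ≤ M * |s - r| := hl₁ s hsb r hrb
    have h2 : ‖γ₂ r - γ₂ s‖ ≤ M * |r - s| := hl₂ r hrb s hsb
    have habs : |s - r| = s - r := abs_of_nonneg (by linarith)
    have habs2 : |r - s| = s - r := by rw [abs_sub_comm]; exact habs
    rw [habs] at h1; rw [habs2] at h2
    have hMsr : M * (s - r) ≤ M * step := mul_le_mul_of_nonneg_left hsr hM
    have hMstep : 2 * (M * step) ≤ δ0 - κ⁻¹ * ε := by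
      have h1' : 2 * (M * step) = (2 * M) * step := by ring
      have h2' : (2 * M) * step ≤ (2 * M + 1) * step :=
        mul_le_mul_of_nonneg_right (by linarith) hstep0.le
      have h3' : (2 * M + 1) * step = δ0 - κ⁻¹ * ε := by
        rw [hstep, mul_comm, div_mul_cancel₀ _ hM1.ne']
      linarith
    have hm1 : γ₁ s ∈ closedBall (γ₁ s) δ0 :=
      mem_closedBall_self (by linarith)
    have hm2 : γ₂ s ∈ closedBall (γ₁ s) δ0 := by
      rw [mem_closedBall, dist_eq_norm, norm_sub_rev]
      have htri : ‖γ₁ s - γ₂ s‖ ≤ ‖γ₁ s - γ₁ r‖ + ‖γ₁ r - γ₂ r‖ + ‖γ₂ r - γ₂ s‖ := by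
        have h' := norm_add₃_le (a := γ₁ s - γ₁ r) (b := γ₁ r - γ₂ r) (c := γ₂ r - γ₂ s)
        have he' : γ₁ s - γ₁ r + (γ₁ r - γ₂ r) + (γ₂ r - γ₂ s) = γ₁ s - γ₂ s := by abel
        rwa [he'] at h'
      linarith
    have hE := hexpK s hsb (γ₁ s) hm1 (γ₂ s) hm2
    rw [hf₁ s hsb, hf₂ s hsb] at hE
    have hpb := hp s hsb
    have : κ * ‖γ₁ s - γ₂ s‖ ≤ ε := hE.trans hpb
    calc ‖γ₁ s - γ₂ s‖ = κ⁻¹ * (κ * ‖γ₁ s - γ₂ s‖) := by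
          rw [← mul_assoc, inv_mul_cancel₀ hκ.ne', one_mul]
      _ ≤ κ⁻¹ * ε := mul_le_mul_of_nonneg_left this (by positivity)

lemma main_aux [ProperSpace G] {f : G → G} {κ : ℝ} (hκ : 0 < κ)
    (hcont : Continuous f) (hcov : CovAt f κ) (hexp : ExpAt f κ) :
    ∃ g : G → G, (∀ x, g (f x) = x) ∧ (∀ y, f (g y) = y) ∧
      ∀ y₁ y₂, κ * ‖g y₁ - g y₂‖ ≤ ‖y₁ - y₂‖ := by
  classical
  haveI : PreconnectedSpace G :=
    ⟨(convex_univ : Convex ℝ (univ : Set G)).isPreconnected⟩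
  set x0 : G := 0 with hx0
  set p : G → ℝ → G := fun y s => f x0 + s • (y - f x0) with hp
  have hlift := fun y : G => lift_exists hκ hcont hcov hexp x0 (y - f x0)
  set γ : G → ℝ → G := fun y => (hlift y).choose with hγ
  have hγ0 : ∀ y, γ y 0 = x0 := fun y => (hlift y).choose_spec.1
  have hγf : ∀ y, ∀ s ∈ Icc (0:ℝ) 1, f (γ y s) = p y s :=
    fun y => (hlift y).choose_spec.2.1
  have hγl : ∀ y, ∀ s ∈ Icc (0:ℝ) 1, ∀ s' ∈ Icc (0:ℝ) 1,
      ‖γ y s - γ y s'‖ ≤ κ⁻¹ * ‖y - f x0‖ * |s - s'| :=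
    fun y => (hlift y).choose_spec.2.2
  set g : G → G := fun y => γ y 1 with hg
  have h01 : (1:ℝ) ∈ Icc (0:ℝ) 1 := ⟨zero_le_one, le_refl 1⟩
  have h00 : (0:ℝ) ∈ Icc (0:ℝ) 1 := ⟨le_refl 0, zero_le_one⟩
  have hp1 : ∀ y, p y 1 = y := by
    intro y
    show f x0 + (1:ℝ) • (y - f x0) = y
    rw [one_smul]; abel
  have hfg : ∀ y, f (g y) = y := by
    intro y
    have := hγf y 1 h01
    rwa [hp1 y] at this
  -- local Lipschitz property of g
  have hgloc : ∀ y₁ : G, ∃ ρ > (0:ℝ), ∀ y₂ : G, ‖y₂ - y₁‖ ≤ ρ →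
      ‖g y₁ - g y₂‖ ≤ κ⁻¹ * ‖y₁ - y₂‖ := by
    intro y₁
    have hK : IsCompact (γ y₁ '' Icc (0:ℝ) 1) := by
      apply IsCompact.image_of_continuousOn isCompact_Icc
      have hlip : LipschitzOnWith (Real.toNNReal (κ⁻¹ * ‖y₁ - f x0‖)) (γ y₁) (Icc 0 1) := by
        apply LipschitzOnWith.of_dist_le_mul
        intro a ha b hb
        rw [dist_eq_norm, dist_eq_norm]
        have := hγl y₁ a ha b hb
        refine this.trans (mul_le_mul_of_nonneg_right ?_ (abs_nonneg _))
        rw [Real.coe_toNNReal _ (by positivity)]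
      exact hlip.continuousOn
    obtain ⟨δ0, hδ0, hEK⟩ := unif_exp hexp hK
    refine ⟨κ * δ0 / 2, by positivity, ?_⟩
    intro y₂ hy₂
    set M := max (κ⁻¹ * ‖y₁ - f x0‖) (κ⁻¹ * ‖y₂ - f x0‖) with hM
    have hM0 : 0 ≤ M := le_trans (by positivity) (le_max_left _ _)
    set ε := ‖y₁ - y₂‖ with hε
    have hεδ : κ⁻¹ * ε < δ0 := by
      have h1 : ε ≤ κ * δ0 / 2 := by rw [hε, norm_sub_rev]; exact hy₂
      have h2 : κ⁻¹ * ε ≤ κ⁻¹ * (κ * δ0 / 2) :=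
        mul_le_mul_of_nonneg_left h1 (by positivity)
      have h3 : κ⁻¹ * (κ * δ0 / 2) = δ0 / 2 := by field_simp
      linarith
    have hpb : ∀ s ∈ Icc (0:ℝ) 1, ‖p y₁ s - p y₂ s‖ ≤ ε := by
      intro s hs
      have heq : p y₁ s - p y₂ s = s • (y₁ - y₂) := by
        show f x0 + s • (y₁ - f x0) - (f x0 + s • (y₂ - f x0)) = s • (y₁ - y₂)
        rw [smul_sub, smul_sub, smul_sub]; abel
      rw [heq, norm_smul, Real.norm_eq_abs, abs_of_nonneg hs.1]
      calc s * ‖y₁ - y₂‖ ≤ 1 * ‖y₁ - y₂‖ :=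
            mul_le_mul_of_nonneg_right hs.2 (norm_nonneg _)
        _ = ε := by rw [one_mul]
    exact lift_compare (p₁ := p y₁) (p₂ := p y₂) hκ hM0 hεδ
      (fun t ht x₁ hx₁ x₂ hx₂ => hEK (γ y₁ t) (mem_image_of_mem _ ht) x₁ hx₁ x₂ hx₂)
      ((hγ0 y₁).trans (hγ0 y₂).symm)
      (hγf y₁) (hγf y₂)
      (fun s hs s' hs' => (hγl y₁ s hs s' hs').trans
        (mul_le_mul_of_nonneg_right (le_max_left _ _) (abs_nonneg _)))
      (fun s hs s' hs' => (hγl y₂ s hs s' hs').trans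
        (mul_le_mul_of_nonneg_right (le_max_right _ _) (abs_nonneg _)))
      hpb 1 h01
  -- continuity of g
  have hgcont : Continuous g := by
    rw [continuous_iff_continuousAt]
    intro y₁
    rw [Metric.continuousAt_iff]
    intro e he
    obtain ⟨ρ, hρ, hloc⟩ := hgloc y₁
    refine ⟨min ρ (κ * e / 2), lt_min hρ (by positivity), ?_⟩
    intro y₂ hy₂
    rw [dist_eq_norm] at hy₂ ⊢
    have h1 : ‖y₂ - y₁‖ ≤ ρ := le_of_lt (lt_of_lt_of_le hy₂ (min_le_left _ _))
    have h2 := hloc y₂ h1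
    rw [norm_sub_rev] at h2
    have h3 : ‖y₁ - y₂‖ < κ * e / 2 := by
      rw [norm_sub_rev]; exact lt_of_lt_of_le hy₂ (min_le_right _ _)
    calc ‖g y₂ - g y₁‖ ≤ κ⁻¹ * ‖y₁ - y₂‖ := h2
      _ < κ⁻¹ * (κ * e / 2) := by
          apply mul_lt_mul_of_pos_left h3 (by positivity)
      _ = e / 2 := by field_simp
      _ < e := by linarith
  -- g ∘ f = id via clopen argument
  have hgf : ∀ x, g (f x) = x := by
    set A := {x : G | g (f x) = x} with hA
    have hx0A : x0 ∈ A := by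
      show g (f x0) = x0
      have hveq : f x0 - f x0 = (0:G) := sub_self _
      have huniq := lift_unique (p := p (f x0)) hκ hexp
        (M := κ⁻¹ * ‖f x0 - f x0‖) (b := 1) (by positivity) zero_le_one
        ((hγ0 (f x0)).trans rfl : γ (f x0) 0 = (fun _ => x0) 0)
        (hγf (f x0))
        (fun s hs => by
          show f x0 = p (f x0) s
          show f x0 = f x0 + s • (f x0 - f x0)
          rw [sub_self, smul_zero, add_zero])
        (hγl (f x0))
        (fun s hs s' hs' => by
          show ‖x0 - x0‖ ≤ κ⁻¹ * ‖f x0 - f x0‖ * |s - s'|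
          rw [sub_self, norm_zero]; positivity)
        1 h01
      exact huniq
    have hAclosed : IsClosed A := isClosed_eq (hgcont.comp hcont) continuous_id
    have hAopen : IsOpen A := by
      rw [Metric.isOpen_iff]
      intro x₁ hx₁
      obtain ⟨ρ, hρ, hloc⟩ := hgloc (f x₁)
      obtain ⟨δe, hδe, hexp₁⟩ := hexp x₁
      have hfc := Metric.continuousAt_iff.mp (hcont.continuousAt (x := x₁))
        (min ρ (κ * δe)) (lt_min hρ (by positivity))
      obtain ⟨δf, hδf, hfc'⟩ := hfc
      refine ⟨min δf δe, lt_min hδf hδe, ?_⟩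
      intro x hx
      rw [mem_ball] at hx
      have hxδf : dist x x₁ < δf := lt_of_lt_of_le hx (min_le_left _ _)
      have hxδe : dist x x₁ ≤ δe := le_of_lt (lt_of_lt_of_le hx (min_le_right _ _))
      have hfx := hfc' hxδf
      rw [dist_eq_norm] at hfx
      have h1 : ‖f x - f x₁‖ ≤ ρ := le_of_lt (lt_of_lt_of_le hfx (min_le_left _ _))
      have h2 := hloc (f x) h1
      rw [norm_sub_rev] at h2
      have h3 : ‖f x₁ - f x‖ < κ * δe := by
        rw [norm_sub_rev]; exact lt_of_lt_of_le hfx (min_le_right _ _)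
      have h4 : ‖g (f x) - g (f x₁)‖ ≤ δe := by
        have h5 : ‖g (f x) - g (f x₁)‖ ≤ κ⁻¹ * (κ * δe) :=
          h2.trans (mul_le_mul_of_nonneg_left h3.le (by positivity))
        have heq : κ⁻¹ * (κ * δe) = δe := by field_simp
        linarith
      have hgx₁ : g (f x₁) = x₁ := hx₁
      have hm1 : g (f x) ∈ closedBall x₁ δe := by
        rw [mem_closedBall, dist_eq_norm]
        rw [hgx₁] at h4
        exact h4
      have hm2 : x ∈ closedBall x₁ δe := mem_closedBall.mpr hxδe
      have hE := hexp₁ (g (f x)) hm1 x hm2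
      rw [hfg (f x), sub_self, norm_zero] at hE
      have h0' : ‖g (f x) - x‖ ≤ 0 := by
        by_contra hc
        push_neg at hc
        nlinarith
      have : ‖g (f x) - x‖ = 0 := le_antisymm h0' (norm_nonneg _)
      exact sub_eq_zero.mp (norm_eq_zero.mp this)
    have : A = univ := IsClopen.eq_univ ⟨hAclosed, hAopen⟩ ⟨x0, hx0A⟩
    intro x
    have hxA : x ∈ A := this ▸ mem_univ x
    exact hxA
  refine ⟨g, hgf, hfg, ?_⟩
  intro y₁ y₂
  obtain ⟨x, hfx, hbd⟩ := global_cov hκ hcont hcov (g y₁) y₂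
  have hxg : x = g y₂ := by
    have := hgf x
    rw [hfx] at this
    exact this.symm
  rw [hxg, hfg y₁] at hbd
  rwa [norm_sub_rev] at hbd

set_option maxHeartbeats 1000000 in
lemma local_reg [CompleteSpace G] {f h : G → G} {xb : G} {α ℓ κ : ℝ}
    (hα : 0 < α) (hℓ : 0 ≤ ℓ) (hκ : 0 < κ) (hκαℓ : κ ≤ α - ℓ)
    (hcont : Continuous f)
    (hlin : LinOpenWith h xb α)
    (hsv : ∃ V ∈ nhds (h xb), ∃ U ∈ nhds xb, ∀ y ∈ V, ∃ x : G, h ⁻¹' {y} ∩ U = {x})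
    (hlip : ∃ W ∈ nhds xb, ∀ x₁ ∈ W, ∀ x₂ ∈ W,
      ‖(f x₁ - h x₁) - (f x₂ - h x₂)‖ ≤ ℓ * ‖x₁ - x₂‖)
    (hhf : h xb = f xb) :
    ∃ δ > (0:ℝ), (∀ r, 0 < r → r ≤ δ →
        closedBall (f xb) (κ * r) ⊆ f '' closedBall xb r) ∧
      ∀ x₁ ∈ closedBall xb δ, ∀ x₂ ∈ closedBall xb δ,
        κ * ‖x₁ - x₂‖ ≤ ‖f x₁ - f x₂‖ := by
  classical
  obtain ⟨U, hU, V, hV, hopen⟩ := hlin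
  obtain ⟨V', hV', U', hU', hsng⟩ := hsv
  obtain ⟨W, hW, hWlip'⟩ := hlip
  set e : G → G := fun x => f x - h x with he
  have hWlip : ∀ x₁ ∈ W, ∀ x₂ ∈ W, ‖e x₁ - e x₂‖ ≤ ℓ * ‖x₁ - x₂‖ := hWlip'
  have hfhe : ∀ x, f x = h x + e x := by
    intro x
    show f x = h x + (f x - h x)
    abel
  have hhfe : ∀ x, h x = f x - e x := by
    intro x
    show h x = f x - (f x - h x)
    abel
  obtain ⟨εa, hεa, hεaW⟩ := Metric.mem_nhds_iff.mp hW
  obtain ⟨εU, hεU, hεUU⟩ := Metric.mem_nhds_iff.mp hU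
  obtain ⟨εU', hεU', hεUU'⟩ := Metric.mem_nhds_iff.mp hU'
  -- continuity of h at xb
  have heCl : LipschitzOnWith (Real.toNNReal ℓ) e (ball xb εa) := by
    apply LipschitzOnWith.of_dist_le_mul
    intro a ha b hb
    rw [dist_eq_norm, dist_eq_norm, Real.coe_toNNReal _ hℓ]
    exact hWlip a (hεaW ha) b (hεaW hb)
  have heC : ContinuousAt e xb :=
    heCl.continuousOn.continuousAt (isOpen_ball.mem_nhds (mem_ball_self hεa))
  have hhC : ContinuousAt h xb := by
    have hfun : h = fun x => f x - e x := funext hhfe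
    rw [hfun]
    exact (hcont.continuousAt).sub heC
  have hVV' : V ∩ V' ∈ nhds (h xb) := inter_mem hV hV'
  obtain ⟨εh, hεh, hεhsub⟩ := Metric.mem_nhds_iff.mp (hhC.preimage_mem_nhds hVV')
  set δb := min (min (εU / 2) (εU' / 4)) (min (εh / 2) (εa / 2)) with hδbdef
  have hδb0 : 0 < δb :=
    lt_min (lt_min (by linarith) (by linarith)) (lt_min (by linarith) (by linarith))
  have hδbεU : δb ≤ εU / 2 := le_trans (min_le_left _ _) (min_le_left _ _)
  have hδbεU' : δb ≤ εU' / 4 := le_trans (min_le_left _ _) (min_le_right _ _)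
  have hδbεh : δb ≤ εh / 2 := le_trans (min_le_right _ _) (min_le_left _ _)
  have hδbεa : δb ≤ εa / 2 := le_trans (min_le_right _ _) (min_le_right _ _)
  -- expansivity of h on closedBall xb δb
  have hexph : ∀ x₁ ∈ closedBall xb δb, ∀ x₂ ∈ closedBall xb δb,
      α * ‖x₁ - x₂‖ ≤ ‖h x₁ - h x₂‖ := by
    intro x₁ hx₁ x₂ hx₂
    rw [mem_closedBall, dist_eq_norm] at hx₁ hx₂
    by_contra hcon
    push_neg at hcon
    have hne : x₁ ≠ x₂ := by
      intro hEq
      simp [hEq] at hcon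
    set r := ‖x₁ - x₂‖ with hr
    have hr0 : 0 < r := norm_pos_iff.mpr (sub_ne_zero.mpr hne)
    have hx₁U : x₁ ∈ U := by
      apply hεUU
      rw [mem_ball, dist_eq_norm]
      linarith
    have hx₂VV : h x₂ ∈ V ∩ V' := by
      apply hεhsub
      rw [mem_ball, dist_eq_norm]
      linarith
    have hmem : h x₂ ∈ ball (h x₁) (α * r) ∩ V := by
      constructor
      · rw [mem_ball, dist_eq_norm, norm_sub_rev]
        exact hcon
      · exact hx₂VV.1
    obtain ⟨x₃, hx₃ball, hx₃eq⟩ := hopen x₁ hx₁U r hr0 hmem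
    rw [mem_ball, dist_eq_norm] at hx₃ball
    have hr2δb : r ≤ 2 * δb := by
      have htr := dist_triangle x₁ xb x₂
      rw [dist_eq_norm, dist_eq_norm, dist_eq_norm, norm_sub_rev xb x₂] at htr
      rw [hr]; linarith
    have hx₃U' : x₃ ∈ U' := by
      apply hεUU'
      rw [mem_ball, dist_eq_norm]
      have htr := dist_triangle x₃ x₁ xb
      rw [dist_eq_norm, dist_eq_norm, dist_eq_norm] at htr
      linarith
    have hx₂U' : x₂ ∈ U' := by
      apply hεUU'
      rw [mem_ball, dist_eq_norm]
      linarith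
    obtain ⟨xu, hxu⟩ := hsng (h x₂) hx₂VV.2
    have e₂ : x₂ = xu := by
      have hmem2 : x₂ ∈ h ⁻¹' {h x₂} ∩ U' := ⟨by simp, hx₂U'⟩
      rw [hxu] at hmem2
      exact hmem2
    have e₃ : x₃ = xu := by
      have hmem3 : x₃ ∈ h ⁻¹' {h x₂} ∩ U' := ⟨by simp [hx₃eq], hx₃U'⟩
      rw [hxu] at hmem3
      exact hmem3
    rw [e₃.trans e₂.symm, norm_sub_rev] at hx₃ball
    rw [← hr] at hx₃ball
    exact lt_irrefl r hx₃ball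
  -- expansivity of f
  have hexpf : ∀ x₁ ∈ closedBall xb δb, ∀ x₂ ∈ closedBall xb δb,
      κ * ‖x₁ - x₂‖ ≤ ‖f x₁ - f x₂‖ := by
    intro x₁ hx₁ x₂ hx₂
    have h1 := hexph x₁ hx₁ x₂ hx₂
    rw [mem_closedBall, dist_eq_norm] at hx₁ hx₂
    have hx₁W : x₁ ∈ W := hεaW (by rw [mem_ball, dist_eq_norm]; linarith)
    have hx₂W : x₂ ∈ W := hεaW (by rw [mem_ball, dist_eq_norm]; linarith)
    have h2 : ‖e x₁ - e x₂‖ ≤ ℓ * ‖x₁ - x₂‖ := hWlip x₁ hx₁W x₂ hx₂W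
    have h3 : ‖h x₁ - h x₂‖ ≤ ‖f x₁ - f x₂‖ + ‖e x₁ - e x₂‖ := by
      have he' : h x₁ - h x₂ = (f x₁ - f x₂) - (e x₁ - e x₂) := by
        rw [hhfe x₁, hhfe x₂]; abel
      rw [he']
      exact norm_sub_le _ _
    have h4 : κ * ‖x₁ - x₂‖ ≤ (α - ℓ) * ‖x₁ - x₂‖ :=
      mul_le_mul_of_nonneg_right hκαℓ (norm_nonneg _)
    nlinarith [norm_nonneg (x₁ - x₂)]
  -- local inverse of h
  have hxbU : xb ∈ U := mem_of_mem_nhds hU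
  obtain ⟨ρ', hρ', hρ'V⟩ := Metric.mem_nhds_iff.mp hV
  have hmin0 : 0 < min (α * δb) ρ' := lt_min (by positivity) hρ'
  set ρ := min (α * δb) ρ' / 2 with hρdef
  have hρ0 : 0 < ρ := by positivity
  have hρlt : ρ < min (α * δb) ρ' := by
    rw [hρdef]; linarith
  have hφex : ∀ y : G, ∃ x : G, y ∈ closedBall (h xb) ρ →
      x ∈ closedBall xb δb ∧ h x = y := by
    intro y
    by_cases hy : y ∈ closedBall (h xb) ρ
    · have hd := mem_closedBall.mp hy
      have hlt : dist y (h xb) < min (α * δb) ρ' := lt_of_le_of_lt hd hρlt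
      have hmem : y ∈ ball (h xb) (α * δb) ∩ V :=
        ⟨mem_ball.mpr (lt_of_lt_of_le hlt (min_le_left _ _)),
          hρ'V (mem_ball.mpr (lt_of_lt_of_le hlt (min_le_right _ _)))⟩
      obtain ⟨x, hxball, hxeq⟩ := hopen xb hxbU δb hδb0 hmem
      exact ⟨x, fun _ => ⟨ball_subset_closedBall hxball, hxeq⟩⟩
    · exact ⟨xb, fun hy' => absurd hy' hy⟩
  choose φ hφspec using hφex
  have hφmem : ∀ y ∈ closedBall (h xb) ρ, φ y ∈ closedBall xb δb :=
    fun y hy => (hφspec y hy).1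
  have hφeq : ∀ y ∈ closedBall (h xb) ρ, h (φ y) = y :=
    fun y hy => (hφspec y hy).2
  have hφlip : ∀ y₁ ∈ closedBall (h xb) ρ, ∀ y₂ ∈ closedBall (h xb) ρ,
      α * ‖φ y₁ - φ y₂‖ ≤ ‖y₁ - y₂‖ := by
    intro y₁ hy₁ y₂ hy₂
    have h1 := hexph (φ y₁) (hφmem y₁ hy₁) (φ y₂) (hφmem y₂ hy₂)
    rwa [hφeq y₁ hy₁, hφeq y₂ hy₂] at h1
  have hhxbmem : h xb ∈ closedBall (h xb) ρ := mem_closedBall_self hρ0.le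
  have hφxb : φ (h xb) = xb := by
    have h1 := hexph (φ (h xb)) (hφmem _ hhxbmem) xb (mem_closedBall_self hδb0.le)
    rw [hφeq _ hhxbmem, sub_self, norm_zero] at h1
    have h2 : ‖φ (h xb) - xb‖ = 0 := le_antisymm (by nlinarith) (norm_nonneg _)
    exact sub_eq_zero.mp (norm_eq_zero.mp h2)
  -- final δ
  set δ := min δb (ρ / α) with hδdef
  have hδ0 : 0 < δ := lt_min hδb0 (div_pos hρ0 hα)
  refine ⟨δ, hδ0, ?_, ?_⟩
  swap
  · intro x₁ hx₁ x₂ hx₂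
    exact hexpf x₁ (closedBall_subset_closedBall (min_le_left _ _) hx₁)
      x₂ (closedBall_subset_closedBall (min_le_left _ _) hx₂)
  intro r hr0 hrδ y hy
  rw [mem_closedBall, dist_eq_norm] at hy
  have hrδb : r ≤ δb := hrδ.trans (min_le_left _ _)
  have hrρα : r ≤ ρ / α := hrδ.trans (min_le_right _ _)
  set q := ℓ / α with hq
  have hq0 : 0 ≤ q := div_nonneg hℓ hα.le
  have hq1 : q < 1 := by rw [div_lt_one hα]; linarith
  have hc1q : (0:ℝ) < 1 - q := by linarith
  set d := κ * r / α with hd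
  have hd0 : 0 < d := by positivity
  have hSr : d / (1 - q) ≤ r := by
    have e1 : d / (1 - q) = κ * r / (α - ℓ) := by
      rw [hd, hq]
      rw [div_div]
      congr 1
      field_simp
    rw [e1, div_le_iff₀ (by linarith : (0:ℝ) < α - ℓ)]
    nlinarith
  set x : ℕ → G := fun n => Nat.rec xb (fun _ xk => φ (y - e xk)) n with hx
  have hx0' : x 0 = xb := rfl
  have hxsucc : ∀ n, x (n + 1) = φ (y - e (x n)) := fun n => rfl
  have harg : ∀ xk : G, ‖xk - xb‖ ≤ r → y - e xk ∈ closedBall (h xb) ρ := by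
    intro xk hxk
    rw [mem_closedBall, dist_eq_norm]
    have hxkW : xk ∈ W := hεaW (by rw [mem_ball, dist_eq_norm]; linarith)
    have hxbW : xb ∈ W := hεaW (mem_ball_self hεa)
    have h2 : ‖e xk - e xb‖ ≤ ℓ * ‖xk - xb‖ := hWlip xk hxkW xb hxbW
    have h3 : y - e xk - h xb = (y - f xb) + (e xb - e xk) := by
      rw [hhfe xb]; abel
    have h4 : ‖e xb - e xk‖ ≤ ℓ * r := by
      rw [norm_sub_rev]
      exact h2.trans (mul_le_mul_of_nonneg_left hxk hℓ)
    have h5 : ‖y - e xk - h xb‖ ≤ ‖y - f xb‖ + ‖e xb - e xk‖ := by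
      rw [h3]; exact norm_add_le _ _
    have h6 : α * r ≤ ρ := by
      have := mul_le_mul_of_nonneg_left hrρα hα.le
      calc α * r ≤ α * (ρ / α) := this
        _ = ρ := by field_simp
    have h7 : κ * r ≤ (α - ℓ) * r := mul_le_mul_of_nonneg_right hκαℓ hr0.le
    have h8 : (α - ℓ) * r = α * r - ℓ * r := by ring
    linarith
  have key : ∀ n, ‖x (n+1) - x n‖ ≤ d * q ^ n ∧
      ‖x (n+1) - xb‖ ≤ (d - d * q ^ (n+1)) / (1 - q) ∧ ‖x n - xb‖ ≤ r := by
    intro n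
    induction n with
    | zero =>
      have hxb_r : ‖x 0 - xb‖ ≤ r := by
        rw [hx0', sub_self, norm_zero]; exact hr0.le
      have hargxb : y - e xb ∈ closedBall (h xb) ρ :=
        harg xb (by rw [sub_self, norm_zero]; exact hr0.le)
      have h1 : ‖x (0+1) - xb‖ ≤ d := by
        rw [hxsucc 0, hx0']
        have h2 := hφlip (y - e xb) hargxb (h xb) hhxbmem
        have h3 : y - e xb - h xb = y - f xb := by
          rw [hhfe xb]; abel
        rw [h3, hφxb] at h2
        have h4 := h2.trans hy
        rw [hd, le_div_iff₀ hα]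
        linarith
      refine ⟨?_, ?_, hxb_r⟩
      · rw [pow_zero, mul_one, hx0']
        exact h1
      · have he1 : (d - d * q ^ (0+1)) / (1 - q) = d := by
          rw [zero_add, pow_one, show d - d * q = d * (1 - q) by ring, mul_div_assoc,
            div_self hc1q.ne', mul_one]
        rw [he1]
        exact h1
    | succ n ih =>
      obtain ⟨ih1, ih2, ih3⟩ := ih
      have hxn1_r : ‖x (n+1) - xb‖ ≤ r := by
        have hpow : (0:ℝ) ≤ q ^ (n+1) := pow_nonneg hq0 _
        have hmono : (d - d * q ^ (n+1)) / (1 - q) ≤ d / (1 - q) := by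
          rw [div_le_div_iff₀ hc1q hc1q]
          nlinarith [mul_nonneg (mul_nonneg hd0.le hpow) hc1q.le]
        exact le_trans ih2 (le_trans hmono hSr)
      have hargn := harg (x n) ih3
      have hargn1 := harg (x (n+1)) hxn1_r
      have hWn : x n ∈ W := hεaW (by rw [mem_ball, dist_eq_norm]; linarith [ih3])
      have hWn1 : x (n+1) ∈ W := hεaW (by rw [mem_ball, dist_eq_norm]; linarith [hxn1_r])
      have ha1 : ‖x (n+2) - x (n+1)‖ ≤ d * q ^ (n+1) := by
        rw [hxsucc (n+1), hxsucc n]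
        have h1 := hφlip (y - e (x (n+1))) hargn1 (y - e (x n)) hargn
        have h2 : y - e (x (n+1)) - (y - e (x n)) = e (x n) - e (x (n+1)) := by abel
        rw [h2] at h1
        have h3 : ‖e (x n) - e (x (n+1))‖ ≤ ℓ * ‖x n - x (n+1)‖ := hWlip _ hWn _ hWn1
        have h4 : ‖x n - x (n+1)‖ ≤ d * q ^ n := by
          rw [norm_sub_rev]; exact ih1
        have h5 : α * ‖φ (y - e (x (n+1))) - φ (y - e (x n))‖ ≤ ℓ * (d * q ^ n) :=
          h1.trans (h3.trans (mul_le_mul_of_nonneg_left h4 hℓ))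
        have h6 : d * q ^ (n+1) = ℓ * (d * q ^ n) / α := by
          rw [hq, pow_succ]
          field_simp
        rw [h6, le_div_iff₀ hα]
        linarith
      refine ⟨ha1, ?_, hxn1_r⟩
      have htri : ‖x (n+2) - xb‖ ≤ ‖x (n+2) - x (n+1)‖ + ‖x (n+1) - xb‖ := by
        have h' := norm_add_le (x (n+2) - x (n+1)) (x (n+1) - xb)
        have he' : x (n+2) - x (n+1) + (x (n+1) - xb) = x (n+2) - xb := by abel
        rwa [he'] at h'
      have hineq : d * q ^ (n+1) + (d - d * q ^ (n+1)) / (1 - q)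
          = (d - d * q ^ (n+2)) / (1 - q) := by
        rw [eq_div_iff hc1q.ne', add_mul, div_mul_cancel₀ _ hc1q.ne']
        ring
      linarith
  have hcauchy : CauchySeq x := by
    apply cauchySeq_of_le_geometric q d hq1
    intro n
    rw [dist_eq_norm, norm_sub_rev]
    exact (key n).1
  obtain ⟨xl, hxl⟩ := cauchySeq_tendsto_of_complete hcauchy
  have hxlball : ‖xl - xb‖ ≤ r := by
    have h1 : Tendsto (fun n => ‖x n - xb‖) atTop (𝓝 ‖xl - xb‖) :=
      ((hxl.sub tendsto_const_nhds).norm)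
    exact le_of_tendsto h1 (Filter.Eventually.of_forall (fun n => (key n).2.2))
  refine ⟨xl, mem_closedBall.mpr (by rw [dist_eq_norm]; exact hxlball), ?_⟩
  have hrel : ∀ n, y = f (x (n+1)) - e (x (n+1)) + e (x n) := by
    intro n
    have h1 : h (x (n+1)) = y - e (x n) := by
      rw [hxsucc n]; exact hφeq _ (harg (x n) (key n).2.2)
    rw [hhfe (x (n+1))] at h1
    rw [h1]
    abel
  have hxtail : Tendsto (fun n => x (n+1)) atTop (𝓝 xl) :=
    hxl.comp (tendsto_add_atTop_nat 1)
  have hxlW : xl ∈ W := hεaW (by rw [mem_ball, dist_eq_norm]; linarith)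
  have hee : Tendsto (fun n => e (x n)) atTop (𝓝 (e xl)) := by
    rw [tendsto_iff_norm_sub_tendsto_zero]
    have hb : ∀ n, ‖e (x n) - e xl‖ ≤ ℓ * ‖x n - xl‖ := by
      intro n
      have hWn : x n ∈ W := hεaW (by rw [mem_ball, dist_eq_norm]; linarith [(key n).2.2])
      exact hWlip _ hWn _ hxlW
    have hg0 : Tendsto (fun n => ℓ * ‖x n - xl‖) atTop (𝓝 0) := by
      have := (tendsto_iff_norm_sub_tendsto_zero.mp hxl).const_mul ℓ
      rwa [mul_zero] at this
    exact squeeze_zero (fun n => norm_nonneg _) hb hg0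
  have heetail : Tendsto (fun n => e (x (n+1))) atTop (𝓝 (e xl)) :=
    hee.comp (tendsto_add_atTop_nat 1)
  have hlhs : Tendsto (fun n => f (x (n+1)) - e (x (n+1)) + e (x n)) atTop
      (𝓝 (f xl - e xl + e xl)) :=
    (((hcont.tendsto xl).comp hxtail).sub heetail).add hee
  have hconst : Tendsto (fun _ : ℕ => y) atTop (𝓝 y) := tendsto_const_nhds
  have hyeq : y = f xl - e xl + e xl := by
    apply tendsto_nhds_unique (l := atTop (α := ℕ)) _ hlhs
    have hfn : (fun _ : ℕ => y) = fun n => f (x (n+1)) - e (x (n+1)) + e (x n) :=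
      funext hrel
    rw [← hfn]
    exact hconst
  rw [hyeq]
  abel


end AuxMine

/-- Global invertibility via strict estimators (main theorem): if the
continuous map `f` admits at each `x` a strict `μ`-estimator `h x` which is
strongly regular around `x`, and `σ = inf_x lop(h x, x) > μ`, then `f` is a
bijection of `ℝⁿ` whose inverse is Lipschitz with constant `(σ - μ)⁻¹`. -/
theorem stmt8 (n : ℕ) (f : EuclideanSpace ℝ (Fin n) → EuclideanSpace ℝ (Fin n))
    (μ : ℝ≥0)
    (hcont : Continuous f)
    (h : EuclideanSpace ℝ (Fin n) →
          EuclideanSpace ℝ (Fin n) → EuclideanSpace ℝ (Fin n))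
    (hest : ∀ x, IsStrictEstimator f (h x) x μ ∧ StronglyRegularAround (h x) x)
    (hσ : (μ : ℝ≥0∞) < ⨅ x, lopBound (h x) x) :
    Function.Bijective f ∧
    ∃ g : EuclideanSpace ℝ (Fin n) → EuclideanSpace ℝ (Fin n),
      (∀ x, g (f x) = x) ∧ (∀ y, f (g y) = y) ∧
      ∀ y₁ y₂, (‖g y₁ - g y₂‖₊ : ℝ≥0∞) ≤
        ((⨅ x, lopBound (h x) x) - (μ : ℝ≥0∞))⁻¹ * (‖y₁ - y₂‖₊ : ℝ≥0∞) := by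
  classical
  set σ := ⨅ x, lopBound (h x) x with hσdef
  have key : ∀ c : ℝ≥0, (μ:ℝ≥0∞) < (c:ℝ≥0∞) → (c:ℝ≥0∞) < σ →
      CovAt f ((c:ℝ) - (μ:ℝ)) ∧ ExpAt f ((c:ℝ) - (μ:ℝ)) := by
    intro c hμc hcσ
    have hμc' : μ < c := ENNReal.coe_lt_coe.mp hμc
    have hκpos : (0:ℝ) < (c:ℝ) - μ := sub_pos.mpr (by exact_mod_cast hμc')
    have hloc : ∀ xb, ∃ δ > (0:ℝ), (∀ r, 0 < r → r ≤ δ →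
        closedBall (f xb) (((c:ℝ) - (μ:ℝ)) * r) ⊆ f '' closedBall xb r) ∧
        ∀ x₁ ∈ closedBall xb δ, ∀ x₂ ∈ closedBall xb δ,
          ((c:ℝ) - (μ:ℝ)) * ‖x₁ - x₂‖ ≤ ‖f x₁ - f x₂‖ := by
      intro xb
      have hlt : (c:ℝ≥0∞) < lopBound (h xb) xb :=
        lt_of_lt_of_le hcσ (hσdef ▸ iInf_le _ xb)
      rw [lopBound] at hlt
      obtain ⟨α, hα⟩ := lt_iSup_iff.mp hlt
      obtain ⟨hαcond, hcα⟩ := lt_iSup_iff.mp hα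
      have hcα' : c < α := ENNReal.coe_lt_coe.mp hcα
      have hXpos : (0:ℝ≥0) < α - c := tsub_pos_of_lt hcα'
      have hlipb := (hest xb).1.2
      have hlt2 : lipBound (fun x => f x - h xb x) xb < ((μ + (α - c) : ℝ≥0) : ℝ≥0∞) :=
        lt_of_le_of_lt hlipb
          (ENNReal.coe_lt_coe.mpr (lt_add_of_pos_right μ hXpos))
      rw [lipBound] at hlt2
      obtain ⟨ℓ, hℓ⟩ := iInf_lt_iff.mp hlt2
      obtain ⟨hℓcond, hℓlt⟩ := iInf_lt_iff.mp hℓ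
      have hℓlt' : ℓ < μ + (α - c) := ENNReal.coe_lt_coe.mp hℓlt
      have hreal : ((c:ℝ) - (μ:ℝ)) ≤ (α:ℝ) - (ℓ:ℝ) := by
        have h1 : (ℓ:ℝ) < (μ:ℝ) + ((α:ℝ) - (c:ℝ)) := by
          have h2 := (NNReal.coe_lt_coe).mpr hℓlt'
          rw [NNReal.coe_add, NNReal.coe_sub hcα'.le] at h2
          exact h2
        linarith
      obtain ⟨δ, hδ, hcov, hexp⟩ := local_reg (f := f) (h := h xb) (xb := xb)
        (α := (α:ℝ)) (ℓ := (ℓ:ℝ)) (κ := (c:ℝ) - (μ:ℝ))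
        (by exact_mod_cast hαcond.1) (ℓ.coe_nonneg) hκpos hreal hcont
        hαcond.2 (hest xb).2.2 hℓcond.2 (hest xb).1.1
      exact ⟨δ, hδ, hcov, hexp⟩
    constructor
    · intro xb
      obtain ⟨δ, hδ, hcov, _⟩ := hloc xb
      exact ⟨δ, hδ, hcov⟩
    · intro xb
      obtain ⟨δ, hδ, _, hexp⟩ := hloc xb
      exact ⟨δ, hδ, hexp⟩
  -- pick a base constant
  obtain ⟨c₀e, hc₀1, hc₀2⟩ := exists_between hσ
  have hc₀top : c₀e ≠ ⊤ := (hc₀2.trans_le le_top).ne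
  set c₀ : ℝ≥0 := c₀e.toNNReal with hc₀
  have hc₀coe : (c₀ : ℝ≥0∞) = c₀e := ENNReal.coe_toNNReal hc₀top
  have hc₀1' : (μ:ℝ≥0∞) < (c₀:ℝ≥0∞) := by rw [hc₀coe]; exact hc₀1
  have hc₀2' : (c₀:ℝ≥0∞) < σ := by rw [hc₀coe]; exact hc₀2
  obtain ⟨hcov₀, hexp₀⟩ := key c₀ hc₀1' hc₀2'
  have hκ₀ : (0:ℝ) < (c₀:ℝ) - μ :=
    sub_pos.mpr (by exact_mod_cast ENNReal.coe_lt_coe.mp hc₀1')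
  obtain ⟨g, hgf, hfg, hglip₀⟩ := main_aux hκ₀ hcont hcov₀ hexp₀
  have hbij : Function.Bijective f := by
    constructor
    · intro a b hab
      rw [← hgf a, hab, hgf b]
    · intro y
      exact ⟨g y, hfg y⟩
  have hbound : ∀ c : ℝ≥0, (μ:ℝ≥0∞) < (c:ℝ≥0∞) → (c:ℝ≥0∞) < σ →
      ∀ y₁ y₂, ((c:ℝ) - (μ:ℝ)) * ‖g y₁ - g y₂‖ ≤ ‖y₁ - y₂‖ := by
    intro c h1 h2 y₁ y₂
    obtain ⟨hcovc, hexpc⟩ := key c h1 h2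
    have hκc : (0:ℝ) < (c:ℝ) - μ :=
      sub_pos.mpr (by exact_mod_cast ENNReal.coe_lt_coe.mp h1)
    obtain ⟨g', hg'f, hf'g, hg'lip⟩ := main_aux hκc hcont hcovc hexpc
    have hgg : ∀ y, g' y = g y := by
      intro y
      rw [← hgf (g' y), hf'g y]
    have := hg'lip y₁ y₂
    rwa [hgg y₁, hgg y₂] at this
  refine ⟨hbij, g, hgf, hfg, ?_⟩
  intro y₁ y₂
  by_cases hσtop : σ = ⊤
  · have hzero : ‖g y₁ - g y₂‖ = 0 := by
      by_contra hne
      have hpos : 0 < ‖g y₁ - g y₂‖ := lt_of_le_of_ne (norm_nonneg _) (Ne.symm hne)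
      obtain ⟨k, hk⟩ := exists_nat_gt (‖y₁ - y₂‖ / ‖g y₁ - g y₂‖)
      have h1 : (μ:ℝ≥0∞) < ((μ + ((k:ℝ≥0) + 1)):ℝ≥0∞) :=
        ENNReal.coe_lt_coe.mpr (lt_add_of_pos_right μ (by positivity))
      have h2 : (((μ + ((k:ℝ≥0) + 1)) : ℝ≥0):ℝ≥0∞) < σ := by
        rw [hσtop]; exact ENNReal.coe_lt_top
      have hb := hbound (μ + ((k:ℝ≥0) + 1)) h1 h2 y₁ y₂
      have hcoe : ((μ + ((k:ℝ≥0) + 1) : ℝ≥0) : ℝ) = (μ:ℝ) + ((k:ℝ) + 1) := by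
        push_cast; ring
      rw [hcoe] at hb
      have h3 : ((μ:ℝ) + ((k:ℝ) + 1) - (μ:ℝ)) = (k:ℝ) + 1 := by ring
      rw [h3] at hb
      rw [div_lt_iff₀ hpos] at hk
      nlinarith
    have hgeq : g y₁ = g y₂ := sub_eq_zero.mp (norm_eq_zero.mp hzero)
    rw [hgeq, sub_self]
    simp
  · set σ' := σ.toNNReal with hσ'
    have hσcoe : (σ':ℝ≥0∞) = σ := ENNReal.coe_toNNReal hσtop
    have hμσ' : μ < σ' := by
      rw [← ENNReal.coe_lt_coe, hσcoe]
      exact hσ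
    have hreal : ((σ':ℝ) - (μ:ℝ)) * ‖g y₁ - g y₂‖ ≤ ‖y₁ - y₂‖ := by
      refine le_of_forall_pos_le_add ?_
      intro ε hε
      by_cases hG : ‖g y₁ - g y₂‖ = 0
      · rw [hG, mul_zero]; positivity
      have hG0 : 0 < ‖g y₁ - g y₂‖ := lt_of_le_of_ne (norm_nonneg _) (Ne.symm hG)
      set e' := ε / ‖g y₁ - g y₂‖ with he'
      have he'0 : 0 < e' := by positivity
      have hμσ'' : (μ:ℝ) < (σ':ℝ) := by exact_mod_cast hμσ'
      have hlt : max (μ:ℝ) ((σ':ℝ) - e') < (σ':ℝ) :=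
        max_lt hμσ'' (by linarith)
      obtain ⟨cr, hcr1, hcr2⟩ := exists_between hlt
      have hcrμ : (μ:ℝ) < cr := lt_of_le_of_lt (le_max_left _ _) hcr1
      have hcr0 : 0 ≤ cr := le_trans μ.coe_nonneg hcrμ.le
      set c : ℝ≥0 := Real.toNNReal cr with hcdef
      have hcoec : (c:ℝ) = cr := Real.coe_toNNReal cr hcr0
      have h1 : (μ:ℝ≥0∞) < (c:ℝ≥0∞) := by
        rw [ENNReal.coe_lt_coe, ← NNReal.coe_lt_coe, hcoec]
        exact hcrμ
      have h2 : (c:ℝ≥0∞) < σ := by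
        rw [← hσcoe, ENNReal.coe_lt_coe, ← NNReal.coe_lt_coe, hcoec]
        exact hcr2
      have hb := hbound c h1 h2 y₁ y₂
      rw [hcoec] at hb
      have hse : (σ':ℝ) - cr ≤ e' := by
        have := le_max_right (μ:ℝ) ((σ':ℝ) - e')
        linarith
      have he'G : e' * ‖g y₁ - g y₂‖ = ε := by
        rw [he']; field_simp
      have hsplit : ((σ':ℝ) - (μ:ℝ)) * ‖g y₁ - g y₂‖
          = (cr - (μ:ℝ)) * ‖g y₁ - g y₂‖ + ((σ':ℝ) - cr) * ‖g y₁ - g y₂‖ := by ring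
      have hp : ((σ':ℝ) - cr) * ‖g y₁ - g y₂‖ ≤ e' * ‖g y₁ - g y₂‖ :=
        mul_le_mul_of_nonneg_right hse hG0.le
      linarith
    have hb0 : (σ' - μ : ℝ≥0) ≠ 0 := (tsub_pos_of_lt hμσ').ne'
    rw [← hσcoe, ← ENNReal.coe_sub, ← ENNReal.div_eq_inv_mul,
      ENNReal.le_div_iff_mul_le (Or.inl (by exact_mod_cast hb0)) (Or.inl ENNReal.coe_ne_top),
      ← ENNReal.coe_mul, ENNReal.coe_le_coe, ← NNReal.coe_le_coe]
    have hcast : ((‖g y₁ - g y₂‖₊ * (σ' - μ) : ℝ≥0) : ℝ)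
        = ‖g y₁ - g y₂‖ * ((σ':ℝ) - (μ:ℝ)) := by
      rw [NNReal.coe_mul, coe_nnnorm, NNReal.coe_sub hμσ'.le]
    rw [hcast, coe_nnnorm]
    linarith
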